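/- Let M be a unital complex star-algebra, let N ⊆ R ⊆ M be star-subalgebras, let E_R : M → R be a conditional expectation onto R, and let E : R → N be a conditional expectation onto N. Suppose there exist λ₁, …, λ_k ∈ R, each commuting with every element of N, such that r = Σ_{i=1}^k λᵢ E(λᵢ* r) for all r ∈ R. Let w ∈ M be unitary with w N w* = N and w R w* = R, and suppose the only element a ∈ N satisfying a x = (w x w*) a for all x ∈ N is a = 0. Then E_R(w) = 0. -/

import Mathlib

/-- Abstract form of the key assertion in Proposition 3.7: for a unitary `w` normalizing
both `N` and `R`, with `Ad w` free on `N` and a Pimsner–Popa basis of `R` over `N`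
contained in the commutant of `N`, one has `E_R(w) = 0`. -/
theorem statement_4
    {M : Type*} [Ring M] [Algebra ℂ M] [StarRing M] [StarModule ℂ M]
    (N R : StarSubalgebra ℂ M) (hNR : N ≤ R)
    (ER : M →ₗ[ℂ] M)
    (hERmem : ∀ x : M, ER x ∈ R)
    (hERid : ∀ r ∈ R, ER r = r)
    (hERbimod : ∀ r ∈ R, ∀ s ∈ R, ∀ x : M, ER (r * x * s) = r * ER x * s)
    (hERstar : ∀ x : M, ER (star x) = star (ER x))
    (E : M →ₗ[ℂ] M)
    (hEmem : ∀ x ∈ R, E x ∈ N)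
    (hEid : ∀ n ∈ N, E n = n)
    (hEbimod : ∀ n ∈ N, ∀ m ∈ N, ∀ x ∈ R, E (n * x * m) = n * E x * m)
    (hEstar : ∀ x ∈ R, E (star x) = star (E x))
    {k : ℕ} (lam : Fin k → M) (hlam : ∀ i, lam i ∈ R)
    (hcomm : ∀ i, ∀ n ∈ N, lam i * n = n * lam i)
    (hbasis : ∀ r ∈ R, r = ∑ i, lam i * E (star (lam i) * r))
    (w : M) (hw1 : star w * w = 1) (hw2 : w * star w = 1)
    (hwN : (fun x => w * x * star w) '' (N : Set M) = (N : Set M))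
    (hwR : (fun x => w * x * star w) '' (R : Set M) = (R : Set M))
    (hfree : ∀ a ∈ N, (∀ x ∈ N, a * x = (w * x * star w) * a) → a = 0) :
    ER w = 0 := by
  have h1N : (1 : M) ∈ N := N.one_mem
  have h1R : (1 : M) ∈ R := R.one_mem
  -- star of lam commutes with N
  have hstarcomm : ∀ i, ∀ n ∈ N, star (lam i) * n = n * star (lam i) := by
    intro i n hn
    have := congrArg star (hcomm i (star n) (star_mem hn))
    simpa [star_mul] using this.symm
  -- w n w* ∈ N for n ∈ N
  have hwNmem : ∀ n ∈ N, w * n * star w ∈ N := by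
    intro n hn
    have : w * n * star w ∈ (fun x => w * x * star w) '' (N : Set M) :=
      ⟨n, hn, rfl⟩
    rwa [hwN] at this
  set v := ER w with hv
  have hvR : v ∈ R := hERmem w
  -- key intertwining: v * n = (w n w*) * v
  have hkey : ∀ n ∈ N, v * n = (w * n * star w) * v := by
    intro n hn
    have hnR : n ∈ R := hNR hn
    have e1 : ER (1 * w * n) = 1 * ER w * n := hERbimod 1 h1R n hnR w
    have e2 : ER ((w * n * star w) * w * 1) = (w * n * star w) * ER w * 1 :=
      hERbimod (w * n * star w) (hNR (hwNmem n hn)) 1 h1R w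
    have h3 : (w * n * star w) * w * 1 = 1 * w * n := by
      rw [mul_one, one_mul, mul_assoc, hw1, mul_one]
    rw [h3] at e2
    rw [e1] at e2
    simpa [hv] using e2
  -- each coefficient vanishes
  have hcoef : ∀ i, E (star (lam i) * v) = 0 := by
    intro i
    have hmemR : star (lam i) * v ∈ R := mul_mem (star_mem (hlam i)) hvR
    apply hfree _ (hEmem _ hmemR)
    intro n hn
    have hnR : n ∈ R := hNR hn
    have hwn : w * n * star w ∈ N := hwNmem n hn
    have e1 : E (1 * (star (lam i) * v) * n) = 1 * E (star (lam i) * v) * n :=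
      hEbimod 1 h1N n hn _ hmemR
    have e2 : E ((w * n * star w) * (star (lam i) * v) * 1)
        = (w * n * star w) * E (star (lam i) * v) * 1 :=
      hEbimod _ hwn 1 h1N _ hmemR
    have h3 : (1 : M) * (star (lam i) * v) * n
        = (w * n * star w) * (star (lam i) * v) * 1 := by
      rw [one_mul, mul_one, mul_assoc, hkey n hn, ← mul_assoc,
        hstarcomm i _ hwn, mul_assoc]
    rw [h3] at e1
    rw [e2] at e1
    simpa using e1.symm
  have := hbasis v hvR
  rw [hv] at this ⊢
  rw [this]
  simp [← hv, hcoef]
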